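/- Let D be a finite multiset of instance values with P(D) ≥ 1 and N(D) ≥ 1 (the dataset) and let C ⊆ D be a sub-multiset with P(C) ≥ 1 and N(C) ≥ 1 (the cover of a pattern). Then oe(C) = ROCAUC(D) − b_ROCAUC(C) is a tight optimistic estimate for the relative ROC AUC interestingness φ^{rROCAUC}: (i) for every sub-multiset C' ⊆ C with P(C') ≥ 1 and N(C') ≥ 1, ROCAUC(D) − ROCAUC(C') ≤ oe(C); and (ii) there exists a sub-multiset C' ⊆ C with P(C') ≥ 1 and N(C') ≥ 1 such that ROCAUC(D) − ROCAUC(C') = oe(C). -/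

import Mathlib

/-- An instance value: a label (`true` = positive, i.e. `y = 1`;
`false` = negative, i.e. `y = 0`) together with a real prediction score. -/
abbrev Inst : Type := Bool × ℝ

/-- `P C`: the number of positive elements of `C`. -/
def P (C : Multiset Inst) : ℕ := (C.filter (fun c => c.1 = true)).card

/-- `N C`: the number of negative elements of `C`. -/
def N (C : Multiset Inst) : ℕ := (C.filter (fun c => c.1 = false)).card

/-- `TP C t`: the number of positives of `C` with prediction strictly above `t`. -/
noncomputable def TP (C : Multiset Inst) (t : ℝ) : ℕ :=
  (C.filter (fun c => c.1 = true ∧ t < c.2)).card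

/-- `FP C t`: the number of negatives of `C` with prediction strictly above `t`. -/
noncomputable def FP (C : Multiset Inst) (t : ℝ) : ℕ :=
  (C.filter (fun c => c.1 = false ∧ t < c.2)).card

/-- The ROC/PR supporting points `(TP, FP)` of `C`, listed in order of
decreasing threshold, for `t` ranging over the prediction values occurring in
`C` together with `t = -∞` (the latter yielding the final point `(P C, N C)`). -/
noncomputable def supportingPoints (C : Multiset Inst) : List (ℝ × ℝ) :=
  (((C.map Prod.snd).toFinset.sort (· ≤ ·)).reverse.map
    (fun t => ((TP C t : ℝ), (FP C t : ℝ)))) ++ [((P C : ℝ), (N C : ℝ))]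

/-- The trapezoidal sum `Σ_{i=2}^{k} |FP_i − FP_{i−1}| · (TP_i + TP_{i−1})/2`
over a list of `(TP, FP)` points. -/
noncomputable def trapROC : List (ℝ × ℝ) → ℝ
  | [] => 0
  | [_] => 0
  | a :: b :: l => |b.2 - a.2| * (b.1 + a.1) / 2 + trapROC (b :: l)

/-- The area under the ROC curve of `C` (defined whenever `P C ≥ 1` and `N C ≥ 1`). -/
noncomputable def ROCAUC (C : Multiset Inst) : ℝ :=
  trapROC (supportingPoints C) / ((P C : ℝ) * (N C : ℝ))

/-- The trapezoidal sum `Σ_{i=2}^{k} |TP_i − TP_{i−1}| ·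
(TP_i/(TP_i+FP_i) + TP_{i−1}/(TP_{i−1}+FP_{i−1}))/2` over a list of `(TP, FP)`
points; in `ℝ`, division by zero yields `0`, realizing the convention `0/0 = 0`. -/
noncomputable def trapPR : List (ℝ × ℝ) → ℝ
  | [] => 0
  | [_] => 0
  | a :: b :: l =>
      |b.1 - a.1| * (b.1 / (b.1 + b.2) + a.1 / (a.1 + a.2)) / 2 + trapPR (b :: l)

/-- The (linearly interpolated) area under the PR curve of `C`
(defined whenever `P C ≥ 1`). -/
noncomputable def PRAUC (C : Multiset Inst) : ℝ :=
  trapPR (supportingPoints C) / (P C : ℝ)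

open Classical in
/-- The lower bound `b_ROCAUC`: `1` on perfect predictions, `1/2` on perfect
predictions with ties, and `0` otherwise.  (On `Bool`, `false < true`
corresponds to `y < y'` for labels `y, y' ∈ {0, 1}`.) -/
noncomputable def bROCAUC (C : Multiset Inst) : ℝ :=
  if ∀ c ∈ C, ∀ c' ∈ C, (c.1 < c'.1 → c.2 < c'.2) ∧ (c'.1 < c.1 → c'.2 < c.2) then 1
  else if ∀ c ∈ C, ∀ c' ∈ C, (c.1 < c'.1 → c.2 ≤ c'.2) ∧ (c'.1 < c.1 → c'.2 ≤ c.2) then 1/2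
  else 0

namespace RocAux

/-- The list of thresholds, in decreasing order. -/
noncomputable def ths (C : Multiset Inst) : List ℝ :=
  ((C.map Prod.snd).toFinset.sort (· ≤ ·)).reverse

lemma mem_ths {C : Multiset Inst} {s : ℝ} : s ∈ ths C ↔ ∃ c ∈ C, c.2 = s := by
  simp [ths, Multiset.mem_toFinset]

lemma ths_sorted (C : Multiset Inst) : (ths C).Pairwise (· > ·) := by
  have h := (Finset.sortedLT_sort (C.map Prod.snd).toFinset).pairwise
  unfold ths
  rw [List.pairwise_reverse]
  exact h

lemma sorted_head_max {l : List ℝ} (h : l.Pairwise (· > ·)) (hne : l ≠ []) :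
    ∀ s ∈ l, s ≤ l.head hne := by
  cases l with
  | nil => simp at hne
  | cons a t =>
    intro s hs
    rcases List.mem_cons.1 hs with rfl | hs
    · simp
    · exact le_of_lt ((List.pairwise_cons.1 h).1 s hs)

lemma sorted_getLast_min : ∀ {l : List ℝ}, l.Pairwise (· > ·) → (hne : l ≠ []) →
    ∀ s ∈ l, l.getLast hne ≤ s
  | [], _, hne => by simp at hne
  | [a], _, _ => by intro s hs; simp at hs; simp [hs]
  | a :: b :: t, h, _ => by
    intro s hs
    have htail : (b :: t).Pairwise (· > ·) := h.tail
    have ih := sorted_getLast_min htail (by simp)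
    rw [List.getLast_cons (by simp)]
    rcases List.mem_cons.1 hs with rfl | hs
    · have hb : List.getLast (b :: t) (by simp) ≤ b := ih b (by simp)
      have hab : b < s := (List.pairwise_cons.1 h).1 b (by simp)
      linarith
    · exact ih s hs

lemma chain_nb {l : List ℝ} (hs : l.Pairwise (· > ·)) :
    l.Chain' (fun a b => b < a ∧ ∀ s ∈ l, b < s → a ≤ s) := by
  rw [List.Chain', List.isChain_iff_getElem]
  intro i hi
  have hp := List.pairwise_iff_get.1 hs
  have hii : i < l.length := by omega
  have hi1 : i + 1 < l.length := by omega
  refine ⟨hp ⟨i, hii⟩ ⟨i + 1, hi1⟩ (by simp), ?_⟩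
  intro s hsm hlt
  obtain ⟨j, rfl⟩ := List.mem_iff_get.1 hsm
  rcases lt_or_ge (j : ℕ) (i + 1) with hj | hj
  · rcases Nat.lt_succ_iff_lt_or_eq.1 hj with hj' | hj'
    · exact le_of_lt (hp j ⟨i, hii⟩ hj')
    · have : j = (⟨i, hii⟩ : Fin l.length) := Fin.ext hj'
      rw [this]; exact le_refl _
  · exfalso
    rcases eq_or_lt_of_le hj with hj' | hj'
    · have : (⟨i + 1, hi1⟩ : Fin l.length) = j := Fin.ext (by simp [hj'.symm])
      rw [← this] at hlt; exact lt_irrefl _ hlt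
    · exact absurd (hp ⟨i + 1, hi1⟩ j hj') (by exact not_lt.2 (le_of_lt hlt))


lemma FP_antitone (C : Multiset Inst) {t t' : ℝ} (h : t' ≤ t) : FP C t ≤ FP C t' := by
  apply Multiset.card_le_card
  apply Multiset.monotone_filter_right
  rintro c ⟨h1, h2⟩
  exact ⟨h1, lt_of_le_of_lt h h2⟩

lemma FP_le_N (C : Multiset Inst) (t : ℝ) : FP C t ≤ N C := by
  apply Multiset.card_le_card
  apply Multiset.monotone_filter_right
  rintro c ⟨h1, _⟩
  exact h1

lemma TP_le_P (C : Multiset Inst) (t : ℝ) : TP C t ≤ P C := by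
  apply Multiset.card_le_card
  apply Multiset.monotone_filter_right
  rintro c ⟨h1, _⟩
  exact h1

lemma FP_eq_zero {C : Multiset Inst} {t : ℝ} (h : ∀ c ∈ C, c.2 ≤ t) : FP C t = 0 := by
  rw [FP, Multiset.card_eq_zero, Multiset.filter_eq_nil]
  rintro c hc ⟨_, h2⟩
  exact absurd (h c hc) (not_le.2 h2)

lemma exists_of_FP_pos {C : Multiset Inst} {t : ℝ} (h : 0 < FP C t) :
    ∃ c ∈ C, c.1 = false ∧ t < c.2 := by
  rw [FP, Multiset.card_pos_iff_exists_mem] at h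
  obtain ⟨c, hc⟩ := h
  rw [Multiset.mem_filter] at hc
  exact ⟨c, hc.1, hc.2⟩

lemma exists_neg_le_of_FP_lt_N {C : Multiset Inst} {t : ℝ} (h : FP C t < N C) :
    ∃ c ∈ C, c.1 = false ∧ c.2 ≤ t := by
  by_contra hc
  push_neg at hc
  have : FP C t = N C := by
    rw [FP, N]
    congr 1
    apply Multiset.filter_congr
    intro c hcm
    constructor
    · rintro ⟨h1, _⟩; exact h1
    · intro h1; exact ⟨h1, hc c hcm h1⟩
  omega

lemma TP_eq_P {C : Multiset Inst} {t : ℝ} (h : ∀ c ∈ C, c.1 = true → t < c.2) :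
    TP C t = P C := by
  rw [TP, P]
  congr 1
  apply Multiset.filter_congr
  intro c hcm
  constructor
  · rintro ⟨h1, _⟩; exact h1
  · intro h1; exact ⟨h1, h c hcm h1⟩

/-- Relation ensuring each trapezoid contributes at least `K` per unit of FP. -/
def Rel (K : ℝ) (a b : ℝ × ℝ) : Prop :=
  a.2 ≤ b.2 ∧ K * (b.2 - a.2) ≤ |b.2 - a.2| * (b.1 + a.1) / 2

lemma trap_ge (K : ℝ) : ∀ (l : List (ℝ × ℝ)) (a : ℝ × ℝ),
    List.Chain' (Rel K) (a :: l) →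
    K * (((a :: l).getLast (by simp)).2 - a.2) ≤ trapROC (a :: l)
  | [], a, _ => by simp [trapROC]
  | b :: l, a, h => by
    rw [List.Chain', List.isChain_cons_cons] at h
    have ih := trap_ge K l b h.2
    have h1 := h.1.2
    have hlast : ((a :: b :: l).getLast (by simp)) = ((b :: l).getLast (by simp)) :=
      List.getLast_cons (by simp)
    rw [hlast]
    show K * _ ≤ |b.2 - a.2| * (b.1 + a.1) / 2 + trapROC (b :: l)
    linarith

/-- The key lower bound for `ROCAUC`. -/
lemma ROCAUC_ge (C : Multiset Inst) (hP : 1 ≤ P C) (hN : 1 ≤ N C) (K : ℝ) (hK : 0 ≤ K)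
    (hjump : ∀ t t' : ℝ, t' < t → (∀ s ∈ ths C, t' < s → t ≤ s) →
        FP C t < FP C t' → 2 * K ≤ (TP C t : ℝ) + (TP C t' : ℝ))
    (hlast : ∀ t : ℝ, (∀ s ∈ ths C, t ≤ s) → FP C t < N C →
        2 * K ≤ (TP C t : ℝ) + (P C : ℝ)) :
    K / (P C : ℝ) ≤ ROCAUC C := by
  classical
  -- C is nonempty, so the threshold list is nonempty
  have hCne : ∃ c, c ∈ C := by
    rw [P, ] at hP
    have := Multiset.card_pos_iff_exists_mem.1 (by omega : 0 < (C.filter (fun c => c.1 = true)).card)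
    obtain ⟨c, hc⟩ := this
    exact ⟨c, (Multiset.mem_filter.1 hc).1⟩
  obtain ⟨c0, hc0⟩ := hCne
  have hthne : ths C ≠ [] := by
    have : c0.2 ∈ ths C := mem_ths.2 ⟨c0, hc0, rfl⟩
    exact List.ne_nil_of_mem this
  set f : ℝ → ℝ × ℝ := fun t => ((TP C t : ℝ), (FP C t : ℝ)) with hf
  set pn : ℝ × ℝ := ((P C : ℝ), (N C : ℝ)) with hpn
  have hsp : supportingPoints C = (ths C).map f ++ [pn] := rfl
  -- derive the jump inequality in Rel form
  have hrel : ∀ t t' : ℝ, (t' < t ∧ ∀ s ∈ ths C, t' < s → t ≤ s) → Rel K (f t) (f t') := by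
    rintro t t' ⟨hlt, hnb⟩
    constructor
    · show (FP C t : ℝ) ≤ (FP C t' : ℝ)
      exact_mod_cast FP_antitone C (le_of_lt hlt)
    · show K * ((FP C t' : ℝ) - (FP C t : ℝ)) ≤
        |(FP C t' : ℝ) - (FP C t : ℝ)| * ((TP C t' : ℝ) + (TP C t : ℝ)) / 2
      rcases eq_or_lt_of_le (FP_antitone C (le_of_lt hlt)) with he | hl
      · rw [he]; simp
      · have hsum := hjump t t' hlt hnb hl
        have hd : (0:ℝ) < (FP C t' : ℝ) - (FP C t : ℝ) := by
          have : (FP C t : ℝ) < (FP C t' : ℝ) := by exact_mod_cast hl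
          linarith
        rw [abs_of_pos hd]
        nlinarith
  -- Rel for the last pair
  have hrellast : ∀ t : ℝ, (∀ s ∈ ths C, t ≤ s) → Rel K (f t) pn := by
    intro t hmin
    constructor
    · show (FP C t : ℝ) ≤ (N C : ℝ)
      exact_mod_cast FP_le_N C t
    · show K * ((N C : ℝ) - (FP C t : ℝ)) ≤
        |(N C : ℝ) - (FP C t : ℝ)| * ((P C : ℝ) + (TP C t : ℝ)) / 2
      rcases eq_or_lt_of_le (FP_le_N C t) with he | hl
      · rw [he]; simp
      · have hsum := hlast t hmin hl
        have hd : (0:ℝ) < (N C : ℝ) - (FP C t : ℝ) := by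
          have : (FP C t : ℝ) < (N C : ℝ) := by exact_mod_cast hl
          linarith
        rw [abs_of_pos hd]
        nlinarith
  -- the chain on the supporting points
  have hchain : List.Chain' (Rel K) (supportingPoints C) := by
    rw [List.Chain', hsp, List.isChain_append]
    refine ⟨?_, ?_, ?_⟩
    · rw [List.isChain_map]
      exact (chain_nb (ths_sorted C)).imp (fun {t t'} h => hrel t t' ⟨h.1, h.2⟩)
    · simp
    · intro x hx y hy
      rw [List.getLast?_eq_getLast (by simpa using hthne)] at hx
      simp only [Option.mem_def, Option.some.injEq] at hx
      simp only [List.head?_cons, Option.mem_def, Option.some.injEq] at hy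
      rw [List.getLast_map] at hx
      subst hy
      rw [← hx]
      exact hrellast _ (sorted_getLast_min (ths_sorted C) hthne)
  -- the head and last of the supporting points
  obtain ⟨t0, l', hl'⟩ := List.exists_cons_of_ne_nil hthne
  have hsp2 : supportingPoints C = f t0 :: (l'.map f ++ [pn]) := by
    rw [hsp, hl']; simp
  have hFPt0 : FP C t0 = 0 := by
    apply FP_eq_zero
    intro c hc
    have hmem : c.2 ∈ ths C := mem_ths.2 ⟨c, hc, rfl⟩
    have hs := ths_sorted C
    rw [hl'] at hs hmem
    simpa using sorted_head_max hs (by simp) c.2 hmem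
  have hlastpt : ((f t0 :: (l'.map f ++ [pn])).getLast (by simp)) = pn := by
    rw [List.getLast_cons (by simp), List.getLast_append]
    simp
  have htrap := trap_ge K (l'.map f ++ [pn]) (f t0) (by rw [← hsp2]; exact hchain)
  rw [hlastpt] at htrap
  have htrap' : K * (N C : ℝ) ≤ trapROC (supportingPoints C) := by
    rw [hsp2]
    have : (f t0).2 = 0 := by simp [hf, hFPt0]
    calc K * (N C : ℝ) = K * (pn.2 - (f t0).2) := by rw [this, hpn]; ring
    _ ≤ _ := htrap
  rw [ROCAUC]
  have hPpos : (0:ℝ) < (P C : ℝ) := by exact_mod_cast hP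
  have hNpos : (0:ℝ) < (N C : ℝ) := by exact_mod_cast hN
  rw [div_le_div_iff₀ hPpos (by positivity)]
  calc K * ((P C : ℝ) * (N C : ℝ)) = (K * (N C : ℝ)) * (P C : ℝ) := by ring
  _ ≤ trapROC (supportingPoints C) * (P C : ℝ) := by
      apply mul_le_mul_of_nonneg_right htrap' (le_of_lt hPpos)

lemma ROCAUC_ge_one {C : Multiset Inst} (hP : 1 ≤ P C) (hN : 1 ≤ N C)
    (hsep : ∀ n ∈ C, ∀ p ∈ C, n.1 = false → p.1 = true → n.2 < p.2) :
    1 ≤ ROCAUC C := by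
  have hPpos : (0:ℝ) < (P C : ℝ) := by exact_mod_cast hP
  have h := ROCAUC_ge C hP hN (P C : ℝ) (le_of_lt hPpos) ?_ ?_
  · rwa [div_self (ne_of_gt hPpos)] at h
  · intro t t' hlt hnb hfp
    obtain ⟨n, hn, hnf, hnt'⟩ := exists_of_FP_pos (Nat.lt_of_le_of_lt (Nat.zero_le _) hfp)
    have hTPt : TP C t = P C := by
      apply TP_eq_P
      intro p hp hpt
      have hnp := hsep n hn p hp hnf hpt
      rcases le_or_gt n.2 t with hc | hc
      · have hmem : n.2 ∈ ths C := mem_ths.2 ⟨n, hn, rfl⟩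
        have := hnb n.2 hmem hnt'
        have : n.2 = t := le_antisymm hc this
        linarith
      · linarith
    have hTPt' : TP C t' = P C := by
      apply TP_eq_P
      intro p hp hpt
      have hnp := hsep n hn p hp hnf hpt
      linarith
    rw [hTPt, hTPt']
    ring_nf
    linarith
  · intro t hmin hfp
    obtain ⟨n, hn, hnf, hnt⟩ := exists_neg_le_of_FP_lt_N hfp
    have hmem : n.2 ∈ ths C := mem_ths.2 ⟨n, hn, rfl⟩
    have hnt2 : n.2 = t := le_antisymm hnt (hmin n.2 hmem)
    have hTPt : TP C t = P C := by
      apply TP_eq_P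
      intro p hp hpt
      have hnp := hsep n hn p hp hnf hpt
      linarith
    rw [hTPt]
    linarith

lemma ROCAUC_ge_half {C : Multiset Inst} (hP : 1 ≤ P C) (hN : 1 ≤ N C)
    (hsep : ∀ n ∈ C, ∀ p ∈ C, n.1 = false → p.1 = true → n.2 ≤ p.2) :
    1 / 2 ≤ ROCAUC C := by
  have hPpos : (0:ℝ) < (P C : ℝ) := by exact_mod_cast hP
  have h := ROCAUC_ge C hP hN ((P C : ℝ) / 2) (by positivity) ?_ ?_
  · have : (P C : ℝ) / 2 / (P C : ℝ) = 1 / 2 := by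
      rw [div_div, div_eq_div_iff (by positivity) (by norm_num)]
      ring
    rwa [this] at h
  · intro t t' hlt hnb hfp
    obtain ⟨n, hn, hnf, hnt'⟩ := exists_of_FP_pos (Nat.lt_of_le_of_lt (Nat.zero_le _) hfp)
    have hTPt' : TP C t' = P C := by
      apply TP_eq_P
      intro p hp hpt
      have hnp := hsep n hn p hp hnf hpt
      linarith
    rw [hTPt']
    have : (0:ℝ) ≤ (TP C t : ℝ) := by positivity
    linarith
  · intro t hmin hfp
    have h1 : (0:ℝ) ≤ (TP C t : ℝ) := by positivity
    linarith

lemma ROCAUC_nonneg {C : Multiset Inst} (hP : 1 ≤ P C) (hN : 1 ≤ N C) :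
    0 ≤ ROCAUC C := by
  have hPpos : (0:ℝ) < (P C : ℝ) := by exact_mod_cast hP
  have h := ROCAUC_ge C hP hN 0 le_rfl ?_ ?_
  · rwa [zero_div] at h
  · intro t t' _ _ _
    have h1 : (0:ℝ) ≤ (TP C t : ℝ) := by positivity
    have h2 : (0:ℝ) ≤ (TP C t' : ℝ) := by positivity
    linarith
  · intro t _ _
    have h1 : (0:ℝ) ≤ (TP C t : ℝ) := by positivity
    have h2 : (0:ℝ) ≤ (P C : ℝ) := by positivity
    linarith

lemma pair_le {p n : Inst} {C : Multiset Inst} (hp : p ∈ C) (hn : n ∈ C) (hne : n ≠ p) :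
    (p ::ₘ {n}) ≤ C := by
  classical
  have h1 : n ∈ C.erase p := (Multiset.mem_erase_of_ne hne).2 hn
  calc p ::ₘ {n} ≤ p ::ₘ C.erase p := Multiset.cons_le_cons p (Multiset.singleton_le.2 h1)
  _ = C := Multiset.cons_erase hp

noncomputable def Mk (a b : ℝ) : Multiset Inst := (true, a) ::ₘ {(false, b)}

lemma map_snd_Mk (a b : ℝ) : (Mk a b).map Prod.snd = a ::ₘ {b} := by simp [Mk]

lemma P_Mk (a b : ℝ) : P (Mk a b) = 1 := by
  simp [P, Mk, Multiset.filter_cons, Multiset.filter_singleton]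

lemma N_Mk (a b : ℝ) : N (Mk a b) = 1 := by
  simp [N, Mk, Multiset.filter_cons, Multiset.filter_singleton]

lemma TP_Mk (a b t : ℝ) : TP (Mk a b) t = if t < a then 1 else 0 := by
  simp only [TP, Mk, Multiset.filter_cons, Multiset.filter_singleton]
  by_cases h : t < a <;> simp [h]

lemma FP_Mk (a b t : ℝ) : FP (Mk a b) t = if t < b then 1 else 0 := by
  simp only [FP, Mk, Multiset.filter_cons, Multiset.filter_singleton]
  by_cases h : t < b <;> simp [h]

lemma ROCAUC_Mk_gt {a b : ℝ} (h : b < a) : ROCAUC (Mk a b) = 1 := by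
  have hsort : ((Mk a b).map Prod.snd).toFinset.sort (· ≤ ·) = [b, a] := by
    rw [map_snd_Mk, Multiset.toFinset_cons, Multiset.toFinset_singleton]
    rw [Finset.pair_comm]
    rw [Finset.sort_insert]
    · simp
    · intro x hx; simp at hx; subst hx; exact le_of_lt h
    · simp [ne_of_lt h]
  rw [ROCAUC, supportingPoints, hsort]
  simp only [List.reverse_cons, List.reverse_nil, List.nil_append, List.cons_append,
    List.map_cons, List.map_nil, TP_Mk, FP_Mk, P_Mk, N_Mk]
  rw [if_neg (lt_irrefl a), if_neg (not_lt.2 (le_of_lt h)), if_pos h, if_neg (lt_irrefl b)]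
  simp [trapROC]

lemma ROCAUC_Mk_eq (a : ℝ) : ROCAUC (Mk a a) = 1/2 := by
  have hsort : ((Mk a a).map Prod.snd).toFinset.sort (· ≤ ·) = [a] := by
    rw [map_snd_Mk, Multiset.toFinset_cons, Multiset.toFinset_singleton]
    simp
  rw [ROCAUC, supportingPoints, hsort]
  simp only [List.reverse_cons, List.reverse_nil, List.nil_append, List.cons_append,
    List.map_cons, List.map_nil, TP_Mk, FP_Mk, P_Mk, N_Mk]
  rw [if_neg (lt_irrefl a)]
  simp [trapROC]

lemma ROCAUC_Mk_lt {a b : ℝ} (h : a < b) : ROCAUC (Mk a b) = 0 := by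
  have hsort : ((Mk a b).map Prod.snd).toFinset.sort (· ≤ ·) = [a, b] := by
    rw [map_snd_Mk, Multiset.toFinset_cons, Multiset.toFinset_singleton]
    rw [Finset.sort_insert]
    · simp
    · intro x hx; simp at hx; subst hx; exact le_of_lt h
    · simp [ne_of_lt h]
  rw [ROCAUC, supportingPoints, hsort]
  simp only [List.reverse_cons, List.reverse_nil, List.nil_append, List.cons_append,
    List.map_cons, List.map_nil, TP_Mk, FP_Mk, P_Mk, N_Mk]
  rw [if_neg (lt_irrefl b), if_neg (not_lt.2 (le_of_lt h)), if_neg (lt_irrefl a), if_pos h]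
  simp [trapROC]

lemma P_Mk_ge (a b : ℝ) : 1 ≤ P (Mk a b) := by rw [P_Mk]
lemma N_Mk_ge (a b : ℝ) : 1 ≤ N (Mk a b) := by rw [N_Mk]

end RocAux

open RocAux

/-- For a dataset `D` and a cover `C ⊆ D` (each containing at
least one positive and one negative), `oe(C) = ROCAUC D − b_ROCAUC C` is a
tight optimistic estimate for the relative ROC AUC interestingness
`φ^{rROCAUC}(C') = ROCAUC D − ROCAUC C'`. -/


theorem bROCAUC_tight_optimistic_estimate (D C : Multiset Inst)
    (hPD : 1 ≤ P D) (hND : 1 ≤ N D) (hsub : C ≤ D)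
    (hPC : 1 ≤ P C) (hNC : 1 ≤ N C) :
    (∀ C' ≤ C, 1 ≤ P C' → 1 ≤ N C' →
      ROCAUC D - ROCAUC C' ≤ ROCAUC D - bROCAUC C) ∧
    (∃ C' ≤ C, 1 ≤ P C' ∧ 1 ≤ N C' ∧
      ROCAUC D - ROCAUC C' = ROCAUC D - bROCAUC C) := by
  classical
  -- extract a positive and a negative element of C
  obtain ⟨p, hpC, hpt⟩ : ∃ p ∈ C, p.1 = true := by
    have h0 : 0 < (C.filter (fun c => c.1 = true)).card := by
      have := hPC; rw [P] at this; omega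
    obtain ⟨p, hp⟩ := Multiset.card_pos_iff_exists_mem.1 h0
    exact ⟨p, (Multiset.mem_filter.1 hp).1, (Multiset.mem_filter.1 hp).2⟩
  obtain ⟨n, hnC, hnf⟩ : ∃ n ∈ C, n.1 = false := by
    have h0 : 0 < (C.filter (fun c => c.1 = false)).card := by
      have := hNC; rw [N] at this; omega
    obtain ⟨n, hn⟩ := Multiset.card_pos_iff_exists_mem.1 h0
    exact ⟨n, (Multiset.mem_filter.1 hn).1, (Multiset.mem_filter.1 hn).2⟩
  have hMkle : ∀ x y : Inst, x ∈ C → y ∈ C → x.1 = true → y.1 = false →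
      Mk x.2 y.2 ≤ C := by
    intro x y hx hy hxt hyf
    have hx' : ((true : Bool), x.2) = x := by
      rw [← hxt]
    have hy' : ((false : Bool), y.2) = y := by
      rw [← hyf]
    rw [Mk, hx', hy']
    refine pair_le hx hy ?_
    intro h
    rw [h, hxt] at hyf
    exact Bool.noConfusion hyf
  by_cases hA : ∀ c ∈ C, ∀ c' ∈ C, (c.1 < c'.1 → c.2 < c'.2) ∧ (c'.1 < c.1 → c'.2 < c.2)
  · have hb : bROCAUC C = 1 := by rw [bROCAUC, if_pos hA]
    have hsepC : ∀ m ∈ C, ∀ q ∈ C, m.1 = false → q.1 = true → m.2 < q.2 := by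
      intro m hm q hq hmf hqt
      exact (hA m hm q hq).1 (by rw [hmf, hqt]; exact Bool.false_lt_true)
    constructor
    · intro C' hC' hPC' hNC'
      rw [hb]
      have hsep' : ∀ m ∈ C', ∀ q ∈ C', m.1 = false → q.1 = true → m.2 < q.2 :=
        fun m hm q hq => hsepC m (Multiset.mem_of_le hC' hm) q (Multiset.mem_of_le hC' hq)
      have := ROCAUC_ge_one hPC' hNC' hsep'
      linarith
    · refine ⟨Mk p.2 n.2, hMkle p n hpC hnC hpt hnf, P_Mk_ge _ _, N_Mk_ge _ _, ?_⟩
      rw [hb, ROCAUC_Mk_gt (hsepC n hnC p hpC hnf hpt)]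
  · by_cases hB : ∀ c ∈ C, ∀ c' ∈ C, (c.1 < c'.1 → c.2 ≤ c'.2) ∧ (c'.1 < c.1 → c'.2 ≤ c.2)
    · have hb : bROCAUC C = 1/2 := by rw [bROCAUC, if_neg hA, if_pos hB]
      have hsepC : ∀ m ∈ C, ∀ q ∈ C, m.1 = false → q.1 = true → m.2 ≤ q.2 := by
        intro m hm q hq hmf hqt
        exact (hB m hm q hq).1 (by rw [hmf, hqt]; exact Bool.false_lt_true)
      constructor
      · intro C' hC' hPC' hNC'
        rw [hb]
        have hsep' : ∀ m ∈ C', ∀ q ∈ C', m.1 = false → q.1 = true → m.2 ≤ q.2 :=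
          fun m hm q hq => hsepC m (Multiset.mem_of_le hC' hm) q (Multiset.mem_of_le hC' hq)
        have := ROCAUC_ge_half hPC' hNC' hsep'
        linarith
      · have hex : ∃ c ∈ C, ∃ c' ∈ C, ∃ _ : c.1 < c'.1, ¬ c.2 < c'.2 := by
          by_contra hexn
          push_neg at hexn
          apply hA
          intro c hc c' hc'
          constructor
          · intro hlt
            by_contra hnlt
            exact absurd hnlt (not_not.2 (hexn c hc c' hc' hlt))
          · intro hlt
            by_contra hnlt
            exact absurd hnlt (not_not.2 (hexn c' hc' c hc hlt))
        obtain ⟨m, hm, q, hq, hlt, hnlt⟩ := hex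
        have hmf : m.1 = false := Bool.lt_iff.1 hlt |>.1
        have hqt : q.1 = true := Bool.lt_iff.1 hlt |>.2
        have heq : q.2 = m.2 := le_antisymm (not_lt.1 hnlt) (hsepC m hm q hq hmf hqt)
        refine ⟨Mk q.2 m.2, hMkle q m hq hm hqt hmf, P_Mk_ge _ _, N_Mk_ge _ _, ?_⟩
        rw [hb, heq, ROCAUC_Mk_eq]
    · have hb : bROCAUC C = 0 := by rw [bROCAUC, if_neg hA, if_neg hB]
      constructor
      · intro C' hC' hPC' hNC'
        rw [hb]
        have := ROCAUC_nonneg hPC' hNC'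
        linarith
      · have hex : ∃ c ∈ C, ∃ c' ∈ C, ∃ _ : c.1 < c'.1, ¬ c.2 ≤ c'.2 := by
          by_contra hexn
          push_neg at hexn
          apply hB
          intro c hc c' hc'
          constructor
          · intro hlt
            by_contra hnlt
            exact absurd hnlt (not_not.2 (hexn c hc c' hc' hlt))
          · intro hlt
            by_contra hnlt
            exact absurd hnlt (not_not.2 (hexn c' hc' c hc hlt))
        obtain ⟨m, hm, q, hq, hlt, hnlt⟩ := hex
        have hmf : m.1 = false := Bool.lt_iff.1 hlt |>.1
        have hqt : q.1 = true := Bool.lt_iff.1 hlt |>.2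
        have hgt : q.2 < m.2 := not_le.1 hnlt
        refine ⟨Mk q.2 m.2, hMkle q m hq hm hqt hmf, P_Mk_ge _ _, N_Mk_ge _ _, ?_⟩
        rw [hb, ROCAUC_Mk_lt hgt]
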